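/- arXiv:2210.01366 — 2 statements merged into one kernel-verified Lean document; each statement's English description precedes it below -/
import Mathlib

section
/- Assume ⟨uₙ, v'ₙ⟩ < 0, and for i ∈ {1, …, n−1} let a_i be the unique integer with u_i − u'_i = a_i · uₙ. Then a_i = −⟨u_i, v'ₙ⟩ for every i ∈ {1, …, n−1}, and the 'wall relation' a₁v₁ + ⋯ + a_{n−1}v_{n−1} + vₙ + v'ₙ = 0 holds in N. -/
/-- Assume `⟨uₙ, v'ₙ⟩ < 0`, and for `i ∈ {1, …, n−1}` let `a_i` be the unique
integer with `u_i − u'_i = a_i • uₙ`. Then `a_i = −⟨u_i, v'ₙ⟩` for every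
`i ∈ {1, …, n−1}`, and the wall relation
`a₁v₁ + ⋯ + a_{n−1}v_{n−1} + vₙ + v'ₙ = 0` holds in `N`. -/
theorem stmt_4 (n : ℕ) (hn : 1 ≤ n)
    (N : Type*) [AddCommGroup N] [Module ℤ N]
    (v v' : Module.Basis (Fin n) ℤ N)
    (hvv' : ∀ i : Fin n, (i : ℕ) < n - 1 → v' i = v i)
    (u u' : Fin n → Module.Dual ℤ N)
    (hu : ∀ i j : Fin n, u i (v j) = if i = j then 1 else 0)
    (hu' : ∀ i j : Fin n, u' i (v' j) = if i = j then 1 else 0)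
    (hneg : u ⟨n - 1, by omega⟩ (v' ⟨n - 1, by omega⟩) < 0)
    (a : Fin n → ℤ)
    (ha : ∀ i : Fin n, (i : ℕ) < n - 1 →
      u i - u' i = a i • u ⟨n - 1, by omega⟩) :
    (∀ i : Fin n, (i : ℕ) < n - 1 → a i = - u i (v' ⟨n - 1, by omega⟩)) ∧
      (∑ i ∈ Finset.univ.filter (fun i : Fin n => (i : ℕ) < n - 1), a i • v i)
        + v ⟨n - 1, by omega⟩ + v' ⟨n - 1, by omega⟩ = 0 := by
  have hnlt : n - 1 < n := by omega
  let m : Fin n := ⟨n - 1, hnlt⟩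
  have hneg' : u m (v' m) < 0 := hneg
  have ha' : ∀ i : Fin n, (i : ℕ) < n - 1 → u i - u' i = a i • u m := ha
  have hmlt : ∀ j : Fin n, j ≠ m → (j : ℕ) < n - 1 := by
    intro j hj
    have h1 : (j : ℕ) ≠ n - 1 := fun h => hj (Fin.ext h)
    have := j.isLt
    omega
  have humvj : ∀ j : Fin n, j ≠ m → u m (v' j) = 0 := by
    intro j hj
    rw [hvv' j (hmlt j hj), hu]
    simp [Ne.symm hj]
  -- expansion of v m in basis v'
  have key : v'.repr (v m) m * u m (v' m) = 1 := by
    have h2 := congrArg (u m) (v'.sum_repr (v m)).symm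
    rw [map_sum] at h2
    simp only [map_smul, smul_eq_mul] at h2
    rw [hu, if_pos rfl] at h2
    rwa [Finset.sum_eq_single m (fun j _ hj => by rw [humvj j hj, mul_zero])
      (fun h => absurd (Finset.mem_univ m) h), eq_comm] at h2
  have hum : u m (v' m) = -1 := by
    rcases Int.isUnit_iff.mp (IsUnit.of_mul_eq_one _ ((mul_comm _ _).trans key)) with h | h
    · omega
    · exact h
  -- Part 1
  have H1 : ∀ i : Fin n, (i : ℕ) < n - 1 → a i = - u i (v' m) := by
    intro i hi
    have him : i ≠ m := by
      intro h
      rw [h] at hi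
      simp only [m] at hi
      omega
    have h3 := congrArg (fun f : Module.Dual ℤ N => f (v' m)) (ha' i hi)
    simp only [LinearMap.sub_apply, LinearMap.smul_apply, smul_eq_mul] at h3
    rw [hu' i m, if_neg him, hum] at h3
    omega
  -- u agrees with the coordinate functions of v
  have hrepr : ∀ (x : N) (j : Fin n), u j x = v.repr x j := by
    intro x j
    have hcoord : u j = v.coord j := by
      apply v.ext
      intro i
      rw [hu, Module.Basis.coord_apply, Module.Basis.repr_self]
      simp [Finsupp.single_apply, eq_comm]
    rw [hcoord, Module.Basis.coord_apply]
  -- Part 2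
  have H2 : (∑ i ∈ Finset.univ.filter (fun i : Fin n => (i : ℕ) < n - 1), a i • v i)
      + v m + v' m = 0 := by
    have hexp2 := (v.sum_repr (v' m)).symm
    rw [← Finset.sum_filter_add_sum_filter_not Finset.univ
      (fun j : Fin n => (j : ℕ) < n - 1)] at hexp2
    have hfilter : Finset.univ.filter (fun j : Fin n => ¬ (j : ℕ) < n - 1) = {m} := by
      ext j
      simp only [Finset.mem_filter, Finset.mem_univ, true_and, Finset.mem_singleton]
      constructor
      · intro h
        exact Fin.ext (by have := j.isLt; simp only [m]; omega)
      · intro h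
        subst h
        simp only [m]
        omega
    rw [hfilter, Finset.sum_singleton, ← hrepr, hum] at hexp2
    have hsum : ∑ j ∈ Finset.univ.filter (fun j : Fin n => (j : ℕ) < n - 1),
        v.repr (v' m) j • v j
        = ∑ j ∈ Finset.univ.filter (fun j : Fin n => (j : ℕ) < n - 1), (-(a j)) • v j := by
      apply Finset.sum_congr rfl
      intro j hj
      have hj' : (j : ℕ) < n - 1 := (Finset.mem_filter.mp hj).2
      rw [← hrepr, show u j (v' m) = -(a j) by have := H1 j hj'; omega]
    simp only [← Int.cast_smul_eq_zsmul ℤ, Int.cast_id] at hsum ⊢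
    rw [hsum] at hexp2
    rw [hexp2]
    simp only [neg_smul, one_smul, one_zsmul, Finset.sum_neg_distrib]
    erw [one_smul]
    abel
  exact ⟨H1, H2⟩
end

section
/- Let A, B, C, D ∈ E with A ≠ B, with C not lying in the affine span of {A, B}, and suppose D = C + t • (B − A) for some real number t > 0 (so that the quadrilateral with vertices A, B, D, C is a trapezoid with side CD parallel to side AB). Then: ∠ C A B + ∠ D B A < π if and only if t < 1; ∠ C A B + ∠ D B A = π if and only if t = 1; and ∠ C A B + ∠ D B A > π if and only if t > 1. -/
open EuclideanGeometry
open scoped RealInnerProductSpace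

private lemma aux_ratio_mono {x1 x2 k : ℝ} (hk : 0 < k) (h : x1 < x2) :
    x1 / Real.sqrt (x1 ^ 2 + k ^ 2) < x2 / Real.sqrt (x2 ^ 2 + k ^ 2) := by
  have h1 : 0 < Real.sqrt (x1 ^ 2 + k ^ 2) := Real.sqrt_pos.2 (by positivity)
  have h2 : 0 < Real.sqrt (x2 ^ 2 + k ^ 2) := Real.sqrt_pos.2 (by positivity)
  have e1 : Real.sqrt (x1 ^ 2 + k ^ 2) ^ 2 = x1 ^ 2 + k ^ 2 := Real.sq_sqrt (by positivity)
  have e2 : Real.sqrt (x2 ^ 2 + k ^ 2) ^ 2 = x2 ^ 2 + k ^ 2 := Real.sq_sqrt (by positivity)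
  rw [div_lt_div_iff₀ h1 h2]
  rcases le_or_gt 0 x1 with hx1 | hx1
  · have hsq : (x1 * Real.sqrt (x2 ^ 2 + k ^ 2)) ^ 2
        < (x2 * Real.sqrt (x1 ^ 2 + k ^ 2)) ^ 2 := by
      rw [mul_pow, mul_pow, e1, e2]
      nlinarith [mul_self_lt_mul_self hx1 h, mul_pos hk hk,
        mul_lt_mul_of_pos_right (mul_self_lt_mul_self hx1 h) (mul_pos hk hk)]
    exact lt_of_pow_lt_pow_left₀ 2 (mul_nonneg (hx1.trans h.le) h1.le) hsq
  · rcases le_or_gt x2 0 with hx2 | hx2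
    · have hx2' : (0:ℝ) ≤ -x2 := by linarith
      have hx12 : -x2 < -x1 := by linarith
      have hsq : (-(x2 * Real.sqrt (x1 ^ 2 + k ^ 2))) ^ 2
          < (-(x1 * Real.sqrt (x2 ^ 2 + k ^ 2))) ^ 2 := by
        rw [neg_sq, neg_sq, mul_pow, mul_pow, e1, e2]
        nlinarith [mul_self_lt_mul_self hx2' hx12, mul_pos hk hk,
          mul_lt_mul_of_pos_right (mul_self_lt_mul_self hx2' hx12) (mul_pos hk hk)]
      have := lt_of_pow_lt_pow_left₀ 2
        (neg_nonneg.2 (mul_nonpos_of_nonpos_of_nonneg hx1.le h2.le)) hsq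
      linarith
    · have ha : x1 * Real.sqrt (x2 ^ 2 + k ^ 2) < 0 := mul_neg_of_neg_of_pos hx1 h2
      have hb : 0 < x2 * Real.sqrt (x1 ^ 2 + k ^ 2) := mul_pos hx2 h1
      linarith

private lemma angle_strictAnti {E : Type*} [NormedAddCommGroup E] [InnerProductSpace ℝ E]
    {u v : E} (hu : u ≠ 0) (hv : ∀ r : ℝ, v ≠ r • u) :
    StrictAnti (fun s : ℝ => InnerProductGeometry.angle (v + s • u) u) := by
  have hun : (0:ℝ) < ‖u‖ := norm_pos_iff.2 hu
  set P : ℝ := ⟪v, u⟫ / ‖u‖ ^ 2 with hP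
  set h : E := v - P • u with hh
  have hhu : ⟪h, u⟫ = 0 := by
    rw [hh, inner_sub_left, real_inner_smul_left, hP, real_inner_self_eq_norm_sq]
    field_simp
    ring
  have hh0 : h ≠ 0 := by
    intro h0
    exact hv P (by rw [← sub_eq_zero]; exact h0)
  set k : ℝ := ‖h‖ with hk
  have hk0 : (0:ℝ) < k := norm_pos_iff.2 hh0
  have key : ∀ s : ℝ, Real.cos (InnerProductGeometry.angle (v + s • u) u)
      = ((P + s) * ‖u‖) / Real.sqrt (((P + s) * ‖u‖) ^ 2 + k ^ 2) := by
    intro s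
    have hvdecomp : v + s • u = h + (P + s) • u := by
      rw [hh]; module
    have hinner : ⟪v + s • u, u⟫ = (P + s) * ‖u‖ ^ 2 := by
      rw [hvdecomp, inner_add_left, real_inner_smul_left, hhu,
        real_inner_self_eq_norm_sq]
      ring
    have hnormsq : ‖v + s • u‖ ^ 2 = ((P + s) * ‖u‖) ^ 2 + k ^ 2 := by
      have hexp : ‖h + (P + s) • u‖ ^ 2
          = ‖h‖ ^ 2 + 2 * ⟪h, (P + s) • u⟫ + ‖(P + s) • u‖ ^ 2 :=
        norm_add_sq_real _ _
      rw [hvdecomp, hexp, real_inner_smul_right, hhu, norm_smul]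
      simp [mul_pow, sq_abs, hk]
      ring
    have hnorm : ‖v + s • u‖ = Real.sqrt (((P + s) * ‖u‖) ^ 2 + k ^ 2) := by
      rw [← hnormsq, Real.sqrt_sq (norm_nonneg _)]
    rw [InnerProductGeometry.cos_angle, hinner, hnorm]
    have hs : (0:ℝ) < Real.sqrt (((P + s) * ‖u‖) ^ 2 + k ^ 2) :=
      Real.sqrt_pos.2 (by positivity)
    field_simp
  intro s1 s2 hs
  have hx : (P + s1) * ‖u‖ < (P + s2) * ‖u‖ := by
    apply mul_lt_mul_of_pos_right _ hun
    linarith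
  have hcos := aux_ratio_mono hk0 hx
  rw [← key s1, ← key s2] at hcos
  by_contra hle
  push_neg at hle
  have := Real.cos_le_cos_of_nonneg_of_le_pi (InnerProductGeometry.angle_nonneg _ _)
    (InnerProductGeometry.angle_le_pi _ _) hle
  linarith

/-- Let `A, B, C, D ∈ E` with `A ≠ B`, with `C` not lying in the affine span of
`{A, B}`, and suppose `D = C + t • (B − A)` for some real `t > 0` (so that the
quadrilateral `A, B, D, C` is a trapezoid with side `CD` parallel to side `AB`).
Then `∠ C A B + ∠ D B A` is less than, equal to, or greater than `π` exactly
according to whether `t` is less than, equal to, or greater than `1`. -/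
theorem stmt_5 (E : Type*) [NormedAddCommGroup E] [InnerProductSpace ℝ E]
    (A B C D : E) (hAB : A ≠ B)
    (hC : C ∉ affineSpan ℝ ({A, B} : Set E))
    (t : ℝ) (ht : 0 < t) (hD : D = C + t • (B - A)) :
    (∠ C A B + ∠ D B A < Real.pi ↔ t < 1) ∧
      (∠ C A B + ∠ D B A = Real.pi ↔ t = 1) ∧
      (Real.pi < ∠ C A B + ∠ D B A ↔ 1 < t) := by
  set u : E := B - A with hu'
  set v : E := C - A with hv'
  have hu : u ≠ 0 := sub_ne_zero.2 (Ne.symm hAB)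
  have hv : ∀ r : ℝ, v ≠ r • u := by
    intro r hr
    apply hC
    have hmem : r • (B -ᵥ A) +ᵥ A ∈ line[ℝ, A, B] := smul_vsub_vadd_mem_affineSpan_pair r A B
    have : r • (B -ᵥ A) +ᵥ A = C := by
      rw [vsub_eq_sub, vadd_eq_add, ← hu', ← hr, hv']
      abel
    rwa [this] at hmem
  have F := angle_strictAnti hu hv
  have hCAB : ∠ C A B = InnerProductGeometry.angle (v + (0:ℝ) • u) u := by
    rw [EuclideanGeometry.angle, vsub_eq_sub, vsub_eq_sub, zero_smul, add_zero]
  have hDBA : ∠ D B A = Real.pi - InnerProductGeometry.angle (v + (t - 1) • u) u := by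
    have h1 : D -ᵥ B = v + (t - 1) • u := by
      rw [vsub_eq_sub, hD, hv', hu']
      module
    have h2 : A -ᵥ B = -u := by rw [vsub_eq_sub, hu']; abel
    rw [EuclideanGeometry.angle, h1, h2, InnerProductGeometry.angle_neg_right]
  rw [hCAB, hDBA]
  set f : ℝ → ℝ := fun s => InnerProductGeometry.angle (v + s • u) u with hf
  have hlt : ∀ a b : ℝ, f a < f b ↔ b < a := fun a b => F.lt_iff_gt
  refine ⟨?_, ?_, ?_⟩
  · constructor
    · intro hsum
      have : f 0 < f (t - 1) := by linarith
      have := (hlt 0 (t - 1)).1 this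
      linarith
    · intro h1
      have : f (t - 1) < f 0 → False := fun hc => by
        have := (hlt (t - 1) 0).1 hc; linarith
      have h2 : f 0 < f (t - 1) := (hlt 0 (t - 1)).2 (by linarith)
      linarith
  · constructor
    · intro hsum
      have heq : f 0 = f (t - 1) := by linarith
      have := F.injective heq
      linarith
    · intro h1
      have : (0:ℝ) = t - 1 := by linarith
      rw [← this]
      linarith
  · constructor
    · intro hsum
      have : f (t - 1) < f 0 := by linarith
      have := (hlt (t - 1) 0).1 this
      linarith
    · intro h1
      have : f (t - 1) < f 0 := (hlt (t - 1) 0).2 (by linarith)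
      linarith
end
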